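/- Every surjective linear isometry T : c₀ → c₀ has the form T(aₙ) = (εₙ a_{π(n)}) for some signs εₙ ∈ {−1,1} and some permutation π of ℕ. -/
import Mathlib


open scoped ZeroAtInfty

namespace C0IsometryAux

open Filter ZeroAtInftyContinuousMap

/-- The standard basis vector `e k` of `c₀`. -/
noncomputable def ee (k : ℕ) : C₀(ℕ, ℝ) :=
  { toFun := fun n => if n = k then 1 else 0
    continuous_toFun := continuous_of_discreteTopology
    zero_at_infty' := by
      rw [Filter.cocompact_eq_cofinite, Nat.cofinite_eq_atTop]
      refine tendsto_atTop_of_eventually_const (i₀ := k + 1) fun n hn => ?_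
      have : n ≠ k := by omega
      simp [this] }

lemma ee_apply (k n : ℕ) : ee k n = if n = k then 1 else 0 := rfl

lemma ee_apply_self (k : ℕ) : ee k k = 1 := by simp [ee_apply]

lemma abs_apply_le_norm (f : C₀(ℕ, ℝ)) (n : ℕ) : |f n| ≤ ‖f‖ := by
  have := f.toBCF.norm_coe_le_norm n
  simpa [Real.norm_eq_abs, ZeroAtInftyContinuousMap.norm_toBCF_eq_norm] using this

lemma norm_le_of (f : C₀(ℕ, ℝ)) {δ : ℝ} (hδ : 0 ≤ δ) (h : ∀ n, |f n| ≤ δ) : ‖f‖ ≤ δ := by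
  rw [← ZeroAtInftyContinuousMap.norm_toBCF_eq_norm]
  exact (BoundedContinuousFunction.norm_le hδ).2 fun n => by
    simpa [Real.norm_eq_abs] using h n

lemma norm_ee (k : ℕ) : ‖ee k‖ = 1 := by
  refine le_antisymm (norm_le_of _ zero_le_one fun n => ?_) ?_
  · rw [ee_apply]; split <;> simp
  · have := abs_apply_le_norm (ee k) k
    rwa [ee_apply_self, abs_one] at this

/-- Evaluation at a point, as an additive monoid hom. -/
def evalAM (n : ℕ) : C₀(ℕ, ℝ) →+ ℝ :=
  { toFun := fun f => f n
    map_zero' := rfl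
    map_add' := fun _ _ => rfl }

lemma sum_apply (S : Finset ℕ) (g : ℕ → C₀(ℕ, ℝ)) (n : ℕ) :
    (∑ k ∈ S, g k) n = ∑ k ∈ S, (g k) n :=
  map_sum (evalAM n) g S

lemma sum_smul_ee_apply (S : Finset ℕ) (v : ℕ → ℝ) (n : ℕ) :
    (∑ k ∈ S, v k • ee k) n = if n ∈ S then v n else 0 := by
  rw [sum_apply]
  have : ∀ k ∈ S, (v k • ee k) n = if n = k then v k else 0 := by
    intro k _
    simp only [ZeroAtInftyContinuousMap.coe_smul, Pi.smul_apply, smul_eq_mul, ee_apply]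
    split <;> simp
  rw [Finset.sum_congr rfl this, Finset.sum_ite_eq S n v]

/-- A sign function valued in `{-1, 1}`. -/
noncomputable def sgn (x : ℝ) : ℝ := if x < 0 then -1 else 1

lemma abs_sgn (x : ℝ) : |sgn x| = 1 := by unfold sgn; split <;> simp

lemma sgn_mul_self (x : ℝ) : sgn x * x = |x| := by
  unfold sgn; rcases lt_or_ge x 0 with h | h
  · rw [if_pos h, abs_of_neg h]; ring
  · rw [if_neg (not_lt.2 h), abs_of_nonneg h, one_mul]

section T

variable (T : C₀(ℕ, ℝ) →ₗ[ℝ] C₀(ℕ, ℝ)) (hT : ∀ x, ‖T x‖ = ‖x‖)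

lemma T_sum_smul_ee (S : Finset ℕ) (v : ℕ → ℝ) (m : ℕ) :
    (T (∑ k ∈ S, v k • ee k)) m = ∑ k ∈ S, v k * (T (ee k)) m := by
  rw [map_sum, sum_apply]
  refine Finset.sum_congr rfl fun k _ => ?_
  rw [map_smul]
  simp

include hT

lemma rowsum (m : ℕ) (S : Finset ℕ) : ∑ k ∈ S, |(T (ee k)) m| ≤ 1 := by
  set a : C₀(ℕ, ℝ) := ∑ k ∈ S, sgn ((T (ee k)) m) • ee k with ha
  have hnorm : ‖a‖ ≤ 1 := by
    refine norm_le_of _ zero_le_one fun n => ?_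
    rw [ha, sum_smul_ee_apply]
    split
    · rw [abs_sgn]
    · simp
  have hval : (T a) m = ∑ k ∈ S, |(T (ee k)) m| := by
    rw [ha, T_sum_smul_ee]
    exact Finset.sum_congr rfl fun k _ => sgn_mul_self _
  calc ∑ k ∈ S, |(T (ee k)) m| = (T a) m := hval.symm
    _ ≤ |(T a) m| := le_abs_self _
    _ ≤ ‖T a‖ := abs_apply_le_norm _ _
    _ = ‖a‖ := hT a
    _ ≤ 1 := hnorm

omit hT in
lemma exists_finset (a : C₀(ℕ, ℝ)) {δ : ℝ} (hδ : 0 < δ) :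
    ∃ S : Finset ℕ, ∀ k ∉ S, |a k| ≤ δ := by
  have h : Tendsto (⇑a) Filter.cofinite (nhds 0) := by
    have := zero_at_infty a
    rwa [Filter.cocompact_eq_cofinite] at this
  have h2 : ∀ᶠ k in Filter.cofinite, |a k| ≤ δ := by
    filter_upwards [Metric.tendsto_nhds.mp h δ hδ] with k hk
    rw [Real.dist_eq, sub_zero] at hk
    exact le_of_lt hk
  have hfin : {k | ¬ |a k| ≤ δ}.Finite := Filter.eventually_cofinite.mp h2
  exact ⟨hfin.toFinset, fun k hk => by
    by_contra hc
    exact hk (hfin.mem_toFinset.2 hc)⟩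

omit hT in
lemma approx (a : C₀(ℕ, ℝ)) (S : Finset ℕ) {δ : ℝ} (hδ : 0 ≤ δ)
    (h : ∀ k ∉ S, |a k| ≤ δ) : ‖a - ∑ k ∈ S, a k • ee k‖ ≤ δ := by
  refine norm_le_of _ hδ fun n => ?_
  have : (a - ∑ k ∈ S, a k • ee k) n = a n - (∑ k ∈ S, a k • ee k) n := rfl
  rw [this, sum_smul_ee_apply]
  by_cases hn : n ∈ S
  · simp [hn, hδ]
  · rw [if_neg hn, sub_zero]; exact h n hn

lemma core (a : C₀(ℕ, ℝ)) (m : ℕ) (ha : T a = ee m) (k0 : ℕ) {δ : ℝ} (hδ : 0 < δ) :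
    ∃ S : Finset ℕ, k0 ∈ S ∧ 1 - δ ≤ ∑ k ∈ S, a k * (T (ee k)) m := by
  obtain ⟨S0, hS0⟩ := exists_finset a hδ
  refine ⟨insert k0 S0, Finset.mem_insert_self _ _, ?_⟩
  set S := insert k0 S0 with hS
  have happrox : ‖a - ∑ k ∈ S, a k • ee k‖ ≤ δ :=
    approx a S hδ.le fun k hk => hS0 k fun hmem => hk (Finset.mem_insert_of_mem hmem)
  have h1 : (T a) m = 1 := by rw [ha, ee_apply_self]
  have h2 : (T (∑ k ∈ S, a k • ee k)) m = ∑ k ∈ S, a k * (T (ee k)) m :=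
    T_sum_smul_ee T S (fun k => a k) m
  have h3 : |(T a) m - (T (∑ k ∈ S, a k • ee k)) m| ≤ δ := by
    have : (T a) m - (T (∑ k ∈ S, a k • ee k)) m = (T (a - ∑ k ∈ S, a k • ee k)) m := by
      rw [map_sub]; rfl
    rw [this]
    calc |(T (a - ∑ k ∈ S, a k • ee k)) m| ≤ ‖T (a - ∑ k ∈ S, a k • ee k)‖ :=
          abs_apply_le_norm _ _
      _ = ‖a - ∑ k ∈ S, a k • ee k‖ := hT _
      _ ≤ δ := happrox
  rw [h1, h2] at h3
  have := abs_le.mp h3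
  linarith [this.2]

lemma exists_nonzero (a : C₀(ℕ, ℝ)) (m : ℕ) (ha : T a = ee m) :
    ∃ k, (T (ee k)) m ≠ 0 := by
  obtain ⟨S, -, hsum⟩ := core T hT a m ha 0 (by norm_num : (0:ℝ) < 1/2)
  by_contra hc
  push_neg at hc
  have : ∑ k ∈ S, a k * (T (ee k)) m = 0 :=
    Finset.sum_eq_zero fun k _ => by rw [hc k, mul_zero]
  rw [this] at hsum
  norm_num at hsum

lemma abs_eq_one (a : C₀(ℕ, ℝ)) (m : ℕ) (ha : T a = ee m) (k0 : ℕ)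
    (hc : (T (ee k0)) m ≠ 0) : |a k0| = 1 := by
  have hnorm_a : ‖a‖ = 1 := by
    have := hT a
    rw [ha, norm_ee] at this
    linarith
  have habs : ∀ k, |a k| ≤ 1 := fun k => hnorm_a ▸ abs_apply_le_norm a k
  have key : ∀ δ : ℝ, 0 < δ → |(T (ee k0)) m| * (1 - |a k0|) ≤ δ := by
    intro δ hδ
    obtain ⟨S, hk0S, hsum⟩ := core T hT a m ha k0 hδ
    have hrow : ∑ k ∈ S, |(T (ee k)) m| ≤ 1 := rowsum T hT m S
    have hterm : ∀ k ∈ S, 0 ≤ |(T (ee k)) m| - a k * (T (ee k)) m := by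
      intro k _
      have h1 : a k * (T (ee k)) m ≤ |a k * (T (ee k)) m| := le_abs_self _
      have h2 : |a k * (T (ee k)) m| ≤ |(T (ee k)) m| := by
        rw [abs_mul]
        calc |a k| * |(T (ee k)) m| ≤ 1 * |(T (ee k)) m| :=
              mul_le_mul_of_nonneg_right (habs k) (abs_nonneg _)
          _ = |(T (ee k)) m| := one_mul _
      linarith
    have hsum2 : ∑ k ∈ S, (|(T (ee k)) m| - a k * (T (ee k)) m) ≤ δ := by
      rw [Finset.sum_sub_distrib]
      linarith
    have hone : |(T (ee k0)) m| - a k0 * (T (ee k0)) m ≤ δ := by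
      calc |(T (ee k0)) m| - a k0 * (T (ee k0)) m
          ≤ ∑ k ∈ S, (|(T (ee k)) m| - a k * (T (ee k)) m) :=
            Finset.single_le_sum hterm hk0S
        _ ≤ δ := hsum2
    have h3 : a k0 * (T (ee k0)) m ≤ |a k0| * |(T (ee k0)) m| := by
      calc a k0 * (T (ee k0)) m ≤ |a k0 * (T (ee k0)) m| := le_abs_self _
        _ = |a k0| * |(T (ee k0)) m| := abs_mul _ _
    nlinarith
  have h0 : |(T (ee k0)) m| * (1 - |a k0|) ≤ 0 := by
    refine le_of_forall_pos_le_add fun ε hε => ?_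
    simpa using key ε hε
  have hcpos : 0 < |(T (ee k0)) m| := abs_pos.2 hc
  have : 1 - |a k0| ≤ 0 := by
    by_contra hcon
    push_neg at hcon
    nlinarith
  linarith [habs k0, this]

end T

end C0IsometryAux

open C0IsometryAux

/-- Every surjective linear isometry of `c₀` is a signed permutation of the
coordinates. -/
theorem c0_isometry_standard (T : C₀(ℕ, ℝ) →ₗ[ℝ] C₀(ℕ, ℝ))
    (hiso : Isometry T) (hsurj : Function.Surjective T) :
    ∃ (ε : ℕ → ℝ) (π : Equiv.Perm ℕ), (∀ n, ε n = 1 ∨ ε n = -1) ∧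
      ∀ (a : C₀(ℕ, ℝ)) (n : ℕ), (T a) n = ε n * a (π n) := by
  have hT : ∀ x, ‖T x‖ = ‖x‖ := hiso.norm_map_of_map_zero (map_zero T)
  have hinj : Function.Injective T := hiso.injective
  set Teq := LinearEquiv.ofBijective T ⟨hinj, hsurj⟩ with hTeq
  set T' : C₀(ℕ, ℝ) →ₗ[ℝ] C₀(ℕ, ℝ) := Teq.symm.toLinearMap with hT'def
  have hTT' : ∀ b, T (T' b) = b := fun b => Teq.apply_symm_apply b
  have hT'T : ∀ a, T' (T a) = a := fun a => Teq.symm_apply_apply a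
  have hT' : ∀ x, ‖T' x‖ = ‖x‖ := fun x => by
    rw [← hT (T' x), hTT']
  -- rowstruct: each row of the matrix of T has a unique nonzero entry, of absolute value 1
  have rowstruct : ∀ m, ∃ k, |(T (ee k)) m| = 1 ∧ ∀ k' ≠ k, (T (ee k')) m = 0 := by
    intro m
    obtain ⟨k0, hc0⟩ := exists_nonzero T hT (T' (ee m)) m (hTT' _)
    have hd : |(T' (ee m)) k0| = 1 := abs_eq_one T hT (T' (ee m)) m (hTT' _) k0 hc0
    have hd0 : (T' (ee m)) k0 ≠ 0 := by
      intro h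
      rw [h, abs_zero] at hd
      norm_num at hd
    have hc1 : |(T (ee k0)) m| = 1 :=
      abs_eq_one T' hT' (T (ee k0)) k0 (hT'T _) m hd0
    refine ⟨k0, hc1, fun k' hk' => ?_⟩
    have hrow := rowsum T hT m {k0, k'}
    rw [Finset.sum_pair (Ne.symm hk')] at hrow
    rw [hc1] at hrow
    have : |(T (ee k')) m| ≤ 0 := by linarith
    exact abs_eq_zero.mp (le_antisymm this (abs_nonneg _))
  classical
  set σ : ℕ → ℕ := fun m => Classical.choose (rowstruct m) with hσdef
  have hσ1 : ∀ m, |(T (ee (σ m))) m| = 1 := fun m => (Classical.choose_spec (rowstruct m)).1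
  have hσ2 : ∀ m k', k' ≠ σ m → (T (ee k')) m = 0 := fun m =>
    (Classical.choose_spec (rowstruct m)).2
  set ε : ℕ → ℝ := fun m => (T (ee (σ m))) m with hεdef
  have hε : ∀ m, ε m = 1 ∨ ε m = -1 := fun m => abs_eq (by norm_num : (0:ℝ) ≤ 1) |>.mp (hσ1 m)
  have hεne : ∀ m, ε m ≠ 0 := by
    intro m
    rcases hε m with h | h <;> rw [h] <;> norm_num
  -- the pointwise formula
  have formula : ∀ (a : C₀(ℕ, ℝ)) (m : ℕ), (T a) m = ε m * a (σ m) := by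
    intro a m
    have key : ∀ δ : ℝ, 0 < δ → |(T a) m - ε m * a (σ m)| ≤ δ := by
      intro δ hδ
      obtain ⟨S0, hS0⟩ := exists_finset a hδ
      set S := insert (σ m) S0 with hS
      have happrox : ‖a - ∑ k ∈ S, a k • ee k‖ ≤ δ :=
        approx a S hδ.le fun k hk => hS0 k fun hmem => hk (Finset.mem_insert_of_mem hmem)
      have h2 : (T (∑ k ∈ S, a k • ee k)) m = ε m * a (σ m) := by
        rw [T_sum_smul_ee T S (fun k => a k) m]
        rw [Finset.sum_eq_single (σ m)]
        · rw [mul_comm]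
        · intro k _ hk
          rw [hσ2 m k hk, mul_zero]
        · intro h
          exact absurd (Finset.mem_insert_self _ _) h
      have h3 : (T a) m - ε m * a (σ m) = (T (a - ∑ k ∈ S, a k • ee k)) m := by
        rw [map_sub, ← h2]; rfl
      rw [h3]
      calc |(T (a - ∑ k ∈ S, a k • ee k)) m| ≤ ‖T (a - ∑ k ∈ S, a k • ee k)‖ :=
            abs_apply_le_norm _ _
        _ = ‖a - ∑ k ∈ S, a k • ee k‖ := hT _
        _ ≤ δ := happrox
    have h0 : |(T a) m - ε m * a (σ m)| ≤ 0 := by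
      refine le_of_forall_pos_le_add fun e he => ?_
      simpa using key e he
    have := abs_eq_zero.mp (le_antisymm h0 (abs_nonneg _))
    linarith
  -- σ is injective
  have hσinj : Function.Injective σ := by
    intro m1 m2 h12
    by_contra hne
    set a := T' (ee m1) with hadef
    have e1 : (T a) m1 = 1 := by rw [hTT', ee_apply_self]
    have e2 : (T a) m2 = 0 := by
      rw [hTT', ee_apply]
      rw [if_neg (by exact fun hc => hne (hc ▸ rfl))]
    rw [formula a m1] at e1
    rw [formula a m2] at e2
    have hz : a (σ m2) = 0 := by
      rcases mul_eq_zero.mp e2 with h | h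
      · exact absurd h (hεne m2)
      · exact h
    rw [← h12] at hz
    rw [hz, mul_zero] at e1
    norm_num at e1
  -- σ is surjective
  have hσsurj : Function.Surjective σ := by
    intro k
    have hne : T (ee k) ≠ 0 := by
      intro h
      have := hT (ee k)
      rw [h, norm_zero, norm_ee] at this
      norm_num at this
    have : ∃ m, (T (ee k)) m ≠ 0 := by
      by_contra hc
      push_neg at hc
      exact hne (DFunLike.ext _ _ fun m => hc m)
    obtain ⟨m, hm⟩ := this
    refine ⟨m, ?_⟩
    by_contra hkm
    exact hm (hσ2 m k fun h => hkm (h ▸ rfl))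
  refine ⟨ε, Equiv.ofBijective σ ⟨hσinj, hσsurj⟩, hε, fun a n => ?_⟩
  exact formula a n
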